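/- Let x_B' < x_D < x_C' and y_A' > y_D > max(y_B', y_C') be real numbers satisfying (y_B' − y_D)/(x_B' − x_D) = 1/√3 and (y_C' − y_D)/(x_C' − x_D) = −1/√3, and define f(y) := (y_A' − y) + √((x_C' − x_B')² + (2y − y_B' − y_C')²). Then f is strictly convex, y = y_D is its unique critical point and unique global minimizer on any interval (y_C' + d, y_A' − d) containing y_D, and the minimum value is f(y_D) = |D'A'| + |D'B'| + |D'C'|, where D' = (x_D, y_D), A' = (x_D, y_A'), B' = (x_B', y_B'), C' = (x_C', y_C') and |·| denotes Euclidean distance in ℝ². -/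

import Mathlib

open MeasureTheory Metric Filter
open scoped RealInnerProductSpace

noncomputable section

/-- Squared Euclidean norm of the full gradient of `u : ℂ → ℂ`
(`|∇u|² = |∂_x u|² + |∂_y u|²`). -/
def gradSq (u : ℂ → ℂ) (z : ℂ) : ℝ :=
  ‖fderiv ℝ u z 1‖ ^ 2 + ‖fderiv ℝ u z Complex.I‖ ^ 2

/-- The Allen–Cahn energy `E(u,Ω) = ∫_Ω (½|∇u|² + W(u))`. -/
def energy (W : ℂ → ℝ) (u : ℂ → ℂ) (Ω : Set ℂ) : ℝ :=
  ∫ z in Ω, ((1 / 2) * gradSq u z + W (u z))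

/-- Minimizing solution in the sense of De Giorgi. -/
def IsMinimizingSolution (W : ℂ → ℝ) (u : ℂ → ℂ) : Prop :=
  ∀ Ω : Set ℂ, IsOpen Ω → Bornology.IsBounded Ω →
    ∀ v : ℂ → ℂ, ContDiff ℝ 1 v → HasCompactSupport v → tsupport v ⊆ Ω →
      energy W u Ω ≤ energy W (u + v) Ω

/-- Hypothesis (H1) on the triple-well potential. -/
structure H1 (W : ℂ → ℝ) (a : Fin 3 → ℂ) (M c₁ c₂ : ℝ) : Prop where
  smooth : ContDiff ℝ 2 W
  nonneg : ∀ z, 0 ≤ W z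
  zeroSet : ∀ z, W z = 0 ↔ ∃ i, z = a i
  inj : Function.Injective a
  coercive : ∀ z : ℂ, M < ‖z‖ → 0 < ⟪gradient W z, z⟫
  c₁pos : 0 < c₁
  c₁lt : c₁ < c₂
  hessLower : ∀ (i : Fin 3) (ξ : ℂ), c₁ * ‖ξ‖ ^ 2 ≤ iteratedFDeriv ℝ 2 W (a i) ![ξ, ξ]
  hessUpper : ∀ (i : Fin 3) (ξ : ℂ), iteratedFDeriv ℝ 2 W (a i) ![ξ, ξ] ≤ c₂ * ‖ξ‖ ^ 2

/-- The 1D action of a path. -/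
def action1D (W : ℂ → ℝ) (U : ℝ → ℂ) : ℝ :=
  ∫ t : ℝ, ((1 / 2) * ‖deriv U t‖ ^ 2 + W (U t))

/-- Actions of 1D connections between two wells. -/
def connectionActions (W : ℂ → ℝ) (p q : ℂ) : Set ℝ :=
  {e | ∃ U : ℝ → ℂ, Differentiable ℝ U ∧
    Tendsto U atBot (nhds p) ∧ Tendsto U atTop (nhds q) ∧ e = action1D W U}

/-- Hypothesis (H2): all connection actions are minimized, with common minimal value `σ`. -/
structure H2 (W : ℂ → ℝ) (a : Fin 3 → ℂ) (σ : ℝ) : Prop where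
  pos : 0 < σ
  least : ∀ i j : Fin 3, i ≠ j → IsLeast (connectionActions W (a i) (a j)) σ

/-- The constants `δ_W, c_W, C_W` from the potential estimate near the wells. -/
structure WellConstants (W : ℂ → ℝ) (a : Fin 3 → ℂ) (δW cW CW : ℝ) : Prop where
  δWpos : 0 < δW
  cWpos : 0 < cW
  cWle : cW ≤ CW
  near : ∀ (i : Fin 3) (u : ℂ), ‖u - a i‖ < δW →
    (1 / 2) * cW * ‖u - a i‖ ^ 2 ≤ W u ∧ W u ≤ (1 / 2) * CW * ‖u - a i‖ ^ 2
  far : ∀ (δ : ℝ) (u : ℂ), 0 ≤ δ → δ < δW → (∀ i : Fin 3, δ ≤ ‖u - a i‖) →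
    (1 / 2) * cW * δ ^ 2 ≤ W u

/-- Line energy (tangential Dirichlet part plus potential, with respect to arclength)
of `u` along the part of the circle of radius `R` parametrized by angles in `s`. -/
def circleEnergyOn (W : ℂ → ℝ) (u : ℂ → ℂ) (R : ℝ) (s : Set ℝ) : ℝ :=
  ∫ θ in s, ((1 / (2 * R)) * ‖deriv (fun t => u (circleMap 0 R t)) θ‖ ^ 2
    + R * W (u (circleMap 0 R θ)))

/-- Total line energy `∫_{∂B_R} (½|∂_T u|² + W(u)) dH¹` along the circle of radius `R`. -/
def circleEnergy (W : ℂ → ℝ) (u : ℂ → ℂ) (R : ℝ) : ℝ :=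
  circleEnergyOn W u R (Set.Ico 0 (2 * Real.pi))

/-- `u` minimizes the energy on `Ω` among (continuous) competitors with its own
boundary values. -/
def MinimizesWithBV (W : ℂ → ℝ) (u : ℂ → ℂ) (Ω : Set ℂ) : Prop :=
  ∀ v : ℂ → ℂ, Continuous v → (∀ z ∉ Ω, v z = u z) → energy W u Ω ≤ energy W v Ω

/-- An open sector with vertex `p` and aperture angles `(θ₁, θ₂)`. -/
def Sector (p : ℂ) (θ₁ θ₂ : ℝ) : Set ℂ :=
  {z | ∃ r θ : ℝ, 0 < r ∧ θ₁ < θ ∧ θ < θ₂ ∧ z = p + r * Complex.exp (θ * Complex.I)}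

/-- A triple junction map centered at `p`: equal to `a k` on the three open sectors with
vertex `p` and opening angle `2π/3`. -/
def IsTripleJunctionMap (a : Fin 3 → ℂ) (p : ℂ) (u₀ : ℂ → ℂ) : Prop :=
  ∃ φ : ℝ, ∀ k : Fin 3,
    ∀ z ∈ Sector p (φ + 2 * Real.pi * ((k : ℕ) : ℝ) / 3)
        (φ + 2 * Real.pi * (((k : ℕ) : ℝ) + 1) / 3),
      u₀ z = a k

/-- The standing setting: a bounded minimizing solution with energy pinching at scale `R₀`. -/
structure Standing (W : ℂ → ℝ) (a : Fin 3 → ℂ) (σ M ε R₀ : ℝ) (u : ℂ → ℂ) : Prop where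
  minimizing : IsMinimizingSolution W u
  diff : Differentiable ℝ u
  bound : ∀ z, ‖u z‖ + Real.sqrt (gradSq u z) ≤ M
  Rpos : 0 < R₀
  circle_lb : 3 * σ - ε ≤ circleEnergy W u R₀
  circle_ub : circleEnergy W u R₀ ≤ 3 * σ + ε
  bulk_lb : 3 * σ - ε ≤ energy W u (Metric.ball 0 R₀) / R₀
  bulk_ub : energy W u (Metric.ball 0 R₀) / R₀ ≤ 3 * σ + ε

/-- The arc structure on `∂B_{R₀}`: three well arcs `I₁`, `I₂`, `I₃` given in angles by
`[t0,t1]`, `[t2,t3]`, `[t4,t5]`, separated by the transition arcs `I₁₂ = [t1,t2]`,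
`I₂₃ = [t3,t4]`, `I₃₁ = [t5, t0+2π]`. -/
structure ArcSetup (a : Fin 3 → ℂ) (δ C₁ C₂ R₀ : ℝ) (u : ℂ → ℂ)
    (t0 t1 t2 t3 t4 t5 : ℝ) : Prop where
  h01 : t0 < t1
  h12 : t1 < t2
  h23 : t2 < t3
  h34 : t3 < t4
  h45 : t4 < t5
  h50 : t5 < t0 + 2 * Real.pi
  end0l : ‖u (circleMap 0 R₀ t0) - a 0‖ ≤ δ
  end0r : ‖u (circleMap 0 R₀ t1) - a 0‖ ≤ δ
  end1l : ‖u (circleMap 0 R₀ t2) - a 1‖ ≤ δ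
  end1r : ‖u (circleMap 0 R₀ t3) - a 1‖ ≤ δ
  end2l : ‖u (circleMap 0 R₀ t4) - a 2‖ ≤ δ
  end2r : ‖u (circleMap 0 R₀ t5) - a 2‖ ≤ δ
  phase0 : ∀ s ∈ Set.Icc t0 t1, ∀ j : Fin 3, j ≠ 0 → δ < ‖u (circleMap 0 R₀ s) - a j‖
  phase1 : ∀ s ∈ Set.Icc t2 t3, ∀ j : Fin 3, j ≠ 1 → δ < ‖u (circleMap 0 R₀ s) - a j‖
  phase2 : ∀ s ∈ Set.Icc t4 t5, ∀ j : Fin 3, j ≠ 2 → δ < ‖u (circleMap 0 R₀ s) - a j‖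
  trans01 : ∀ s ∈ Set.Icc t1 t2, ∀ j : Fin 3, δ < ‖u (circleMap 0 R₀ s) - a j‖
  trans12 : ∀ s ∈ Set.Icc t3 t4, ∀ j : Fin 3, δ < ‖u (circleMap 0 R₀ s) - a j‖
  trans20 : ∀ s ∈ Set.Icc t5 (t0 + 2 * Real.pi), ∀ j : Fin 3, δ < ‖u (circleMap 0 R₀ s) - a j‖
  meas_lb : C₁ ≤ R₀ * ((t2 - t1) + (t4 - t3) + (t0 + 2 * Real.pi - t5))
  meas_ub : R₀ * ((t2 - t1) + (t4 - t3) + (t0 + 2 * Real.pi - t5)) ≤ C₂ / δ ^ 2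

/-- Midpoint of the arc with angles `θ₁ ≤ θ₂` on the circle of radius `R`. -/
def midpt (R θ₁ θ₂ : ℝ) : ℂ := circleMap 0 R ((θ₁ + θ₂) / 2)

/-- `D` minimizes the total distance to `A`, `B`, `C` over the closed disk of radius `R`. -/
def IsFermatPoint (R : ℝ) (A B C D : ℂ) : Prop :=
  D ∈ Metric.closedBall (0 : ℂ) R ∧
    ∀ P ∈ Metric.closedBall (0 : ℂ) R,
      dist D A + dist D B + dist D C ≤ dist P A + dist P B + dist P C

/-- The tangential derivative of `u` at `z` (along the circle centered at the origin
through `z`). -/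
def tangentialDeriv (u : ℂ → ℂ) (z : ℂ) : ℂ :=
  if z = 0 then 0 else ‖z‖⁻¹ • fderiv ℝ u z (Complex.I * z)

/-- Planar cross product of two vectors. -/
def cross2 (w v : ℂ) : ℝ := w.re * v.im - w.im * v.re

/-- the function
`f(y) = (y_A' - y) + √((x_C' - x_B')² + (2y - y_B' - y_C')²)` is strictly convex, `y_D`
is its unique critical point and the unique minimizer on any interval
`(y_C' + d, y_A' - d)` containing `y_D`, and `f(y_D) = |D'A'| + |D'B'| + |D'C'|`. -/
theorem statement14 (xB xC xD yA yB yC yD : ℝ)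
    (h1 : xB < xD) (h2 : xD < xC) (h3 : max yB yC < yD) (h4 : yD < yA)
    (hB : Real.sqrt 3 * (yB - yD) = xB - xD)
    (hC : Real.sqrt 3 * (yC - yD) = -(xC - xD)) :
    StrictConvexOn ℝ Set.univ
      (fun y : ℝ => (yA - y) + Real.sqrt ((xC - xB) ^ 2 + (2 * y - yB - yC) ^ 2)) ∧
    deriv (fun y : ℝ => (yA - y) + Real.sqrt ((xC - xB) ^ 2 + (2 * y - yB - yC) ^ 2)) yD
      = 0 ∧
    (∀ y : ℝ,
      deriv (fun y : ℝ => (yA - y) + Real.sqrt ((xC - xB) ^ 2 + (2 * y - yB - yC) ^ 2)) y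
        = 0 → y = yD) ∧
    (∀ d y : ℝ, yC + d < yD → yD < yA - d → y ∈ Set.Ioo (yC + d) (yA - d) → y ≠ yD →
      (yA - yD) + Real.sqrt ((xC - xB) ^ 2 + (2 * yD - yB - yC) ^ 2) <
        (yA - y) + Real.sqrt ((xC - xB) ^ 2 + (2 * y - yB - yC) ^ 2)) ∧
    (yA - yD) + Real.sqrt ((xC - xB) ^ 2 + (2 * yD - yB - yC) ^ 2) =
      dist (⟨xD, yD⟩ : ℂ) (⟨xD, yA⟩ : ℂ) + dist (⟨xD, yD⟩ : ℂ) (⟨xB, yB⟩ : ℂ)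
        + dist (⟨xD, yD⟩ : ℂ) (⟨xC, yC⟩ : ℂ) := by
  have ha : 0 < xC - xB := by linarith
  set f : ℝ → ℝ := fun y : ℝ =>
    (yA - y) + Real.sqrt ((xC - xB) ^ 2 + (2 * y - yB - yC) ^ 2) with hf_def
  set q : ℝ → ℝ := fun y : ℝ => (xC - xB) ^ 2 + (2 * y - yB - yC) ^ 2 with hq_def
  have hqpos : ∀ y, 0 < q y := fun y => by positivity
  have hsq : ∀ y, 0 < Real.sqrt (q y) := fun y => Real.sqrt_pos.mpr (hqpos y)
  have hs3 : (0:ℝ) < Real.sqrt 3 := by positivity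
  have hsq3 : Real.sqrt 3 ^ 2 = 3 := Real.sq_sqrt (by norm_num)
  have hlin : ∀ y : ℝ, HasDerivAt (fun y : ℝ => 2 * y - yB - yC) 2 y := fun y => by
    simpa using (((hasDerivAt_id y).const_mul 2).sub_const yB).sub_const yC
  have hqD : ∀ y, HasDerivAt q (4 * (2 * y - yB - yC)) y := by
    intro y
    have := ((hlin y).pow 2).const_add ((xC - xB) ^ 2)
    refine this.congr_deriv ?_
    norm_num
    ring
  have hgD : ∀ y, HasDerivAt (fun y => Real.sqrt (q y))
      (2 * (2 * y - yB - yC) * (Real.sqrt (q y))⁻¹) y := by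
    intro y
    have := (hqD y).sqrt (ne_of_gt (hqpos y))
    convert this using 1
    field_simp
    ring
  set F' : ℝ → ℝ := fun y => -1 + 2 * (2 * y - yB - yC) * (Real.sqrt (q y))⁻¹ with hF'_def
  have hfD : ∀ y, HasDerivAt f (F' y) y := by
    intro y
    have h1 : HasDerivAt (fun y : ℝ => yA - y) (-1) y := by
      simpa using (hasDerivAt_id y).const_sub yA
    exact h1.add (hgD y)
  have hderiv : deriv f = F' := funext fun y => (hfD y).deriv
  have hF'D : ∀ y, HasDerivAt F'
      (4 * (xC - xB) ^ 2 / (Real.sqrt (q y) * q y)) y := by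
    intro y
    have hu : HasDerivAt (fun y : ℝ => 2 * (2 * y - yB - yC)) (2 * 2) y :=
      (hlin y).const_mul 2
    have hinv : HasDerivAt (fun y => (Real.sqrt (q y))⁻¹)
        (-(2 * (2 * y - yB - yC) * (Real.sqrt (q y))⁻¹) / (Real.sqrt (q y)) ^ 2) y :=
      (hgD y).inv (ne_of_gt (hsq y))
    have hprod := (hu.mul hinv).const_add (-1 : ℝ)
    refine hprod.congr_deriv ?_
    have h2 : Real.sqrt (q y) ^ 2 = q y := Real.sq_sqrt (hqpos y).le
    have hne : Real.sqrt (q y) ≠ 0 := (hsq y).ne'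
    have hqne : q y ≠ 0 := (hqpos y).ne'
    rw [h2]
    rw [hq_def]
    simp only
    have hne' : Real.sqrt ((xC - xB) ^ 2 + (2 * y - yB - yC) ^ 2) ≠ 0 := by
      rw [hq_def] at hne; exact hne
    have hqne' : (xC - xB) ^ 2 + (2 * y - yB - yC) ^ 2 ≠ 0 := by
      rw [hq_def] at hqne; exact hqne
    field_simp
    ring
  have hmono : StrictMono F' :=
    strictMono_of_deriv_pos fun y => by
      rw [(hF'D y).deriv]; positivity
  have hconv : StrictConvexOn ℝ Set.univ f := by
    have hcont : Continuous f := by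
      apply Continuous.add (by fun_prop)
      exact (Real.continuous_sqrt.comp (by fun_prop))
    exact StrictMono.strictConvexOn_univ_of_deriv hcont (hderiv ▸ hmono)
  -- key algebraic fact: √3 * (2 yD - yB - yC) = xC - xB
  have hkey : Real.sqrt 3 * (2 * yD - yB - yC) = xC - xB := by nlinarith [hB, hC]
  have htpos : 0 < 2 * yD - yB - yC := by
    have hyB : yB < yD := lt_of_le_of_lt (le_max_left _ _) h3
    have hyC : yC < yD := lt_of_le_of_lt (le_max_right _ _) h3
    linarith
  -- √(q yD) = 2 * (2 yD - yB - yC)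
  have hsqD : Real.sqrt (q yD) = 2 * (2 * yD - yB - yC) := by
    have : q yD = (2 * (2 * yD - yB - yC)) ^ 2 := by
      rw [hq_def]; simp only
      nlinarith [hkey, hsq3]
    rw [this, Real.sqrt_sq (by linarith)]
  have hcrit : deriv f yD = 0 := by
    rw [hderiv, hF'_def]
    simp only
    rw [hsqD]
    field_simp
    norm_num
  refine ⟨hconv, hcrit, ?_, ?_, ?_⟩
  · -- uniqueness of critical point
    intro y hy
    rw [hderiv] at hy
    by_contra hne
    rcases lt_or_gt_of_ne hne with h | h
    · have := hmono h
      rw [hderiv] at hcrit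
      rw [hy, hcrit] at this
      exact lt_irrefl 0 this
    · have := hmono h
      rw [hderiv] at hcrit
      rw [hy, hcrit] at this
      exact lt_irrefl 0 this
  · -- strict minimizer
    intro d y _ _ _ hne
    have hfy : f yD < f y := by
      rcases lt_or_gt_of_ne hne with h | h
      · have hs := hconv.slope_lt_deriv (Set.mem_univ y) (Set.mem_univ yD) h (hfD yD).differentiableAt
        rw [hcrit] at hs
        rw [slope_def_field] at hs
        have := div_neg_iff.mp (by simpa using hs)
        rcases this with ⟨hnum, hden⟩ | ⟨hnum, hden⟩
        · linarith
        · linarith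
      · have hs := hconv.deriv_lt_slope (Set.mem_univ yD) (Set.mem_univ y) h (hfD yD).differentiableAt
        rw [hcrit] at hs
        rw [slope_def_field] at hs
        have := div_pos_iff.mp (by simpa using hs)
        rcases this with ⟨hnum, hden⟩ | ⟨hnum, hden⟩
        · linarith
        · linarith
    simpa [hf_def] using hfy
  · -- value at the minimum
    have hyB : yB < yD := lt_of_le_of_lt (le_max_left _ _) h3
    have hyC : yC < yD := lt_of_le_of_lt (le_max_right _ _) h3
    have hA : dist (⟨xD, yD⟩ : ℂ) (⟨xD, yA⟩ : ℂ) = yA - yD := by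
      rw [Complex.dist_of_re_eq (show (⟨xD, yD⟩ : ℂ).re = (⟨xD, yA⟩ : ℂ).re from rfl)]
      simp [Real.dist_eq, abs_of_nonpos (by linarith : yD - yA ≤ 0)]
    have hBd : dist (⟨xD, yD⟩ : ℂ) (⟨xB, yB⟩ : ℂ) = 2 * (yD - yB) := by
      rw [Complex.dist_eq_re_im]
      simp only
      have hx : xD - xB = Real.sqrt 3 * (yD - yB) := by linarith [hB]
      have : (xD - xB) ^ 2 + (yD - yB) ^ 2 = (2 * (yD - yB)) ^ 2 := by
        rw [hx]; nlinarith [hsq3]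
      rw [this, Real.sqrt_sq (by linarith)]
    have hCd : dist (⟨xD, yD⟩ : ℂ) (⟨xC, yC⟩ : ℂ) = 2 * (yD - yC) := by
      rw [Complex.dist_eq_re_im]
      simp only
      have hx : xD - xC = -(Real.sqrt 3 * (yD - yC)) := by linarith [hC]
      have : (xD - xC) ^ 2 + (yD - yC) ^ 2 = (2 * (yD - yC)) ^ 2 := by
        rw [hx]; nlinarith [hsq3]
      rw [this, Real.sqrt_sq (by linarith)]
    rw [hA, hBd, hCd]
    have : Real.sqrt ((xC - xB) ^ 2 + (2 * yD - yB - yC) ^ 2) = 2 * (2 * yD - yB - yC) := by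
      have := hsqD
      rw [hq_def] at this
      exact this
    rw [this]
    ring
end
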